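/- For each n ≥ 1, let Xₙ and Yₙ be independent random variables, each uniform on {1, …, n}; let Zₙ = gcd(Xₙ, Yₙ) and let Wₙ = r(Xₙ), where r(m) is the largest integer a such that a² divides m. Then both (Zₙ) and (Wₙ) converge in law to the Zeta law of parameter 2: for every positive integer k, P(Zₙ = k) → k^{-2}/ζ(2) and P(Wₙ = k) → k^{-2}/ζ(2) as n → ∞. -/

import Mathlib

open Filter Topology Real

/-- `r m` is the largest integer `a` such that `a ^ 2` divides `m` (for `m ≥ 1`). -/
def squarefullPart (m : ℕ) : ℕ := Nat.findGreatest (fun a => a ^ 2 ∣ m) m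

open ArithmeticFunction Finset
open scoped ArithmeticFunction.Moebius

lemma norm_moebius_le_one (d : ℕ) : ‖((μ d : ℤ) : ℝ)‖ ≤ 1 := by
  rw [Real.norm_eq_abs, ← Int.cast_abs]
  exact_mod_cast abs_moebius_le_one

lemma summable_moebius_div_sq : Summable (fun d : ℕ => (μ d : ℝ) / (d : ℝ) ^ 2) := by
  apply (Real.summable_one_div_nat_pow.mpr one_lt_two).of_norm_bounded
  intro d
  rcases eq_or_ne d 0 with rfl | hd
  · simp
  rw [norm_div, norm_pow, Real.norm_natCast]
  gcongr
  exact norm_moebius_le_one d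

lemma tsum_moebius_div_sq : ∑' d : ℕ, (μ d : ℝ) / (d : ℝ) ^ 2 = 6 / π ^ 2 := by
  have h1 := DirichletCharacter.LSeries.mul_mu_eq_one (1 : DirichletCharacter ℂ 1) (s := 2)
      (by norm_num)
  rw [DirichletCharacter.modOne_eq_one] at h1
  rw [one_mul, LSeries_one_eq_riemannZeta (by norm_num), riemannZeta_two] at h1
  have hπ : ((π : ℂ)) ^ 2 ≠ 0 := pow_ne_zero 2 (Complex.ofReal_ne_zero.mpr Real.pi_ne_zero)
  have hL : LSeries (fun n => (μ n : ℂ)) 2 = 6 / (π : ℂ) ^ 2 := by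
    rw [eq_div_iff hπ]
    linear_combination 6 * h1
  have hterm : (fun n : ℕ => (((μ n : ℝ) / (n : ℝ) ^ 2 : ℝ) : ℂ))
      = LSeries.term (fun n => (μ n : ℂ)) 2 := by
    funext n
    rcases eq_or_ne n 0 with rfl | hn
    · simp [LSeries.term_zero]
    · rw [LSeries.term_of_ne_zero hn]
      push_cast
      rw [Complex.cpow_two]
  have := Complex.ofReal_tsum (L := SummationFilter.unconditional _) (fun d : ℕ => (μ d : ℝ) / (d : ℝ) ^ 2)
  rw [hterm] at this
  have h2 : ((∑' d : ℕ, (μ d : ℝ) / (d : ℝ) ^ 2 : ℝ) : ℂ) = ((6 / π ^ 2 : ℝ) : ℂ) := by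
    rw [this, ← LSeries, hL]
    push_cast
    ring
  exact_mod_cast h2

lemma nat_div_tendsto_atTop {c : ℕ} (hc : 0 < c) :
    Tendsto (fun n : ℕ => n / c) atTop atTop := by
  rw [tendsto_atTop]
  intro b
  filter_upwards [eventually_ge_atTop (b * c)] with n hn
  exact (Nat.le_div_iff_mul_le hc).mpr hn

lemma nat_div_cast_tendsto {c : ℕ} (hc : 0 < c) :
    Tendsto (fun m : ℕ => ((m / c : ℕ) : ℝ) / (m : ℝ)) atTop (𝓝 (1 / (c : ℝ))) := by
  have hc' : (0:ℝ) < c := by exact_mod_cast hc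
  have hlow : Tendsto (fun m : ℕ => 1 / (c:ℝ) - 1 / m) atTop (𝓝 (1 / (c:ℝ))) := by
    simpa using (tendsto_const_nhds (x := 1 / (c:ℝ))).sub tendsto_one_div_atTop_nhds_zero_nat
  apply tendsto_of_tendsto_of_tendsto_of_le_of_le' hlow tendsto_const_nhds
  · filter_upwards [eventually_ge_atTop 1] with m hm
    have hm' : (0:ℝ) < m := by exact_mod_cast hm
    have h1 : (m:ℝ) < (((m / c : ℕ):ℝ) + 1) * c := by
      have : m < (m / c + 1) * c := by
        calc m = c * (m / c) + m % c := (Nat.div_add_mod m c).symm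
          _ < c * (m / c) + c := Nat.add_lt_add_left (Nat.mod_lt m hc) _
          _ = (m / c + 1) * c := by ring
      exact_mod_cast this
    have h2 : (1 / (c:ℝ) - 1 / m) * m = (m:ℝ)/c - 1 := by field_simp
    rw [le_div_iff₀ hm', h2, sub_le_iff_le_add, div_le_iff₀ hc']
    linarith
  · filter_upwards [eventually_ge_atTop 1] with m hm
    have hm' : (0:ℝ) < m := by exact_mod_cast hm
    have : ((m / c : ℕ):ℝ) ≤ (m:ℝ) / c := Nat.cast_div_le
    calc ((m / c : ℕ):ℝ) / m ≤ ((m:ℝ)/c) / m := by gcongr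
      _ = 1 / c := by field_simp


lemma sum_moebius_divisors (g : ℕ) :
    ∑ d ∈ g.divisors, ((μ d : ℤ) : ℝ) = if g = 1 then 1 else 0 := by
  have h := congrArg (fun f => f g) coe_zeta_mul_moebius
  simp only [ArithmeticFunction.one_apply, ArithmeticFunction.coe_zeta_mul_apply] at h
  exact_mod_cast h

lemma dvd_of_sq_dvd_sq_mul_squarefree {s t d : ℕ} (ht : Squarefree t)
    (h : d ^ 2 ∣ s ^ 2 * t) : d ∣ s := by
  have ht0 : t ≠ 0 := ht.ne_zero
  rcases eq_or_ne s 0 with rfl | hs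
  · exact dvd_zero d
  rcases eq_or_ne d 0 with rfl | hd
  · exfalso
    have h0 : s ^ 2 * t = 0 := zero_dvd_iff.mp (by simpa using h)
    simp [pow_eq_zero_iff, hs, ht0] at h0
  rw [← Nat.factorization_le_iff_dvd hd hs, Finsupp.le_def]
  intro p
  have h2 := (Nat.factorization_le_iff_dvd (pow_ne_zero 2 hd)
      (mul_ne_zero (pow_ne_zero 2 hs) ht0)).mpr h
  have h3 := Finsupp.le_def.mp h2 p
  rw [Nat.factorization_mul (pow_ne_zero 2 hs) ht0] at h3
  rw [Nat.factorization_pow, Nat.factorization_pow] at h3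
  simp only [Finsupp.add_apply, Finsupp.smul_apply, smul_eq_mul] at h3
  have h4 := ht.natFactorization_le_one p
  omega

lemma squarefullPart_eq_iff {k q : ℕ} (hk : 1 ≤ k) (hq : 1 ≤ q) :
    squarefullPart (k ^ 2 * q) = k ↔ Squarefree q := by
  constructor
  · intro h
    rw [Nat.squarefree_iff_prime_squarefree]
    rintro p hp ⟨c, hc⟩
    have hc0 : 0 < c := by
      rcases Nat.eq_zero_or_pos c with rfl | hc'
      · omega
      · exact hc'
    have hple : p * p ≤ q := hc ▸ Nat.le_mul_of_pos_right _ hc0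
    rw [squarefullPart, Nat.findGreatest_eq_iff] at h
    refine h.2.2 (n := k * p) ?_ ?_ ?_
    · have := hp.two_le; nlinarith
    · calc k * p ≤ k * q := by
            have : p ≤ q := le_trans (Nat.le_mul_of_pos_right _ hp.pos) hple
            exact Nat.mul_le_mul_left _ this
        _ ≤ k ^ 2 * q := Nat.mul_le_mul_right _ (Nat.le_self_pow two_ne_zero k)
    · rw [mul_pow]
      exact mul_dvd_mul_left _ ⟨c, by rw [hc]; ring⟩
  · intro hsq
    rw [squarefullPart, Nat.findGreatest_eq_iff]
    refine ⟨?_, fun _ => ⟨q, by ring⟩, fun n hn hn' hdvd => ?_⟩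
    · calc k ≤ k ^ 2 := Nat.le_self_pow two_ne_zero k
        _ ≤ k ^ 2 * q := Nat.le_mul_of_pos_right _ hq
    · have := dvd_of_sq_dvd_sq_mul_squarefree hsq hdvd
      have := Nat.le_of_dvd hk this
      omega

lemma sum_moebius_sq_dvd {m q : ℕ} (hq1 : 1 ≤ q) (hqm : q ≤ m) :
    ∑ d ∈ (Icc 1 m).filter (fun d => d ^ 2 ∣ q), ((μ d : ℤ) : ℝ)
      = if Squarefree q then 1 else 0 := by
  obtain ⟨t, s, hst, ht⟩ := Nat.sq_mul_squarefree q
  have hq0 : q ≠ 0 := by omega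
  have hs0 : s ≠ 0 := by
    rintro rfl
    rw [← hst] at hq0
    simp at hq0
  have hsq : s ^ 2 ∣ q := Dvd.intro t hst
  have hsm : s ≤ m := by
    have h1 : s ≤ s ^ 2 := Nat.le_self_pow two_ne_zero s
    have h2 : s ^ 2 ≤ q := Nat.le_of_dvd (by omega) hsq
    omega
  have key : (Icc 1 m).filter (fun d => d ^ 2 ∣ q) = s.divisors := by
    ext d
    simp only [mem_filter, mem_Icc, Nat.mem_divisors]
    constructor
    · rintro ⟨⟨h1, h2⟩, hd⟩
      exact ⟨dvd_of_sq_dvd_sq_mul_squarefree ht (hst ▸ hd), hs0⟩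
    · rintro ⟨hds, -⟩
      have hd0 : d ≠ 0 := by rintro rfl; exact hs0 (Nat.eq_zero_of_zero_dvd hds)
      have hdle : d ≤ s := Nat.le_of_dvd (Nat.pos_of_ne_zero hs0) hds
      exact ⟨⟨Nat.pos_of_ne_zero hd0, le_trans hdle hsm⟩,
        dvd_trans (pow_dvd_pow_of_dvd hds 2) hsq⟩
  have hiff : s = 1 ↔ Squarefree q := by
    constructor
    · rintro rfl
      rw [← hst]; simpa using ht
    · intro hsf
      exact Nat.isUnit_iff.mp (hsf s (by rw [← pow_two]; exact hsq))
  rw [key, sum_moebius_divisors, if_congr hiff rfl rfl]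

lemma count_dvd_Icc (m d : ℕ) : ((Icc 1 m).filter (fun q => d ∣ q)).card = m / d := by
  have : Icc 1 m = Ioc 0 m := by rw [← Finset.Icc_add_one_left_eq_Ioc, zero_add]
  rw [this]
  exact Nat.Ioc_filter_dvd_card_eq_div m d

lemma squarefree_count_eq (m : ℕ) :
    (((Icc 1 m).filter Squarefree).card : ℝ)
      = ∑ d ∈ Icc 1 m, ((μ d : ℤ) : ℝ) * ((m / d ^ 2 : ℕ) : ℝ) := by
  have h1 : (((Icc 1 m).filter Squarefree).card : ℝ)
      = ∑ q ∈ Icc 1 m, (if Squarefree q then (1:ℝ) else 0) := by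
    rw [card_filter]; push_cast; rfl
  rw [h1]
  calc ∑ q ∈ Icc 1 m, (if Squarefree q then (1:ℝ) else 0)
      = ∑ q ∈ Icc 1 m, ∑ d ∈ (Icc 1 m).filter (fun d => d ^ 2 ∣ q), ((μ d : ℤ):ℝ) := by
        refine sum_congr rfl fun q hq => ?_
        rw [mem_Icc] at hq
        rw [sum_moebius_sq_dvd hq.1 hq.2]
    _ = ∑ q ∈ Icc 1 m, ∑ d ∈ Icc 1 m, (if d ^ 2 ∣ q then ((μ d : ℤ):ℝ) else 0) := by
        refine sum_congr rfl fun q _ => ?_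
        rw [sum_filter]
    _ = ∑ d ∈ Icc 1 m, ∑ q ∈ Icc 1 m, (if d ^ 2 ∣ q then ((μ d : ℤ):ℝ) else 0) :=
        sum_comm
    _ = ∑ d ∈ Icc 1 m, ((μ d : ℤ):ℝ) * ((m / d ^ 2 : ℕ) : ℝ) := by
        refine sum_congr rfl fun d _ => ?_
        rw [← sum_filter, sum_const, count_dvd_Icc, nsmul_eq_mul, mul_comm]

lemma sum_moebius_dvd_gcd {m a b : ℕ} (ha1 : 1 ≤ a) (ham : a ≤ m) (hb1 : 1 ≤ b) :
    ∑ d ∈ (Icc 1 m).filter (fun d => d ∣ Nat.gcd a b), ((μ d : ℤ) : ℝ)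
      = if Nat.gcd a b = 1 then 1 else 0 := by
  have hg : 0 < Nat.gcd a b := Nat.gcd_pos_of_pos_left b ha1
  have hgm : Nat.gcd a b ≤ m := le_trans (Nat.le_of_dvd ha1 (Nat.gcd_dvd_left a b)) ham
  have key : (Icc 1 m).filter (fun d => d ∣ Nat.gcd a b) = (Nat.gcd a b).divisors := by
    ext d
    simp only [mem_filter, mem_Icc, Nat.mem_divisors]
    constructor
    · rintro ⟨-, hd⟩
      exact ⟨hd, hg.ne'⟩
    · rintro ⟨hd, -⟩
      exact ⟨⟨Nat.pos_of_ne_zero (fun h => by subst h; omega : d ≠ 0),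
        le_trans (Nat.le_of_dvd hg hd) hgm⟩, hd⟩
  rw [key, sum_moebius_divisors]

lemma coprime_count_eq (m : ℕ) :
    ((((Icc 1 m) ×ˢ (Icc 1 m)).filter (fun p => Nat.gcd p.1 p.2 = 1)).card : ℝ)
      = ∑ d ∈ Icc 1 m, ((μ d : ℤ) : ℝ) * ((m / d : ℕ) : ℝ) ^ 2 := by
  have h1 : ((((Icc 1 m) ×ˢ (Icc 1 m)).filter (fun p => Nat.gcd p.1 p.2 = 1)).card : ℝ)
      = ∑ p ∈ (Icc 1 m) ×ˢ (Icc 1 m), (if Nat.gcd p.1 p.2 = 1 then (1:ℝ) else 0) := by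
    rw [card_filter]; push_cast; rfl
  rw [h1]
  calc ∑ p ∈ (Icc 1 m) ×ˢ (Icc 1 m), (if Nat.gcd p.1 p.2 = 1 then (1:ℝ) else 0)
      = ∑ p ∈ (Icc 1 m) ×ˢ (Icc 1 m), ∑ d ∈ Icc 1 m,
          (if d ∣ Nat.gcd p.1 p.2 then ((μ d : ℤ):ℝ) else 0) := by
        refine sum_congr rfl fun p hp => ?_
        rw [mem_product, mem_Icc, mem_Icc] at hp
        rw [← sum_filter, sum_moebius_dvd_gcd hp.1.1 hp.1.2 hp.2.1]
    _ = ∑ d ∈ Icc 1 m, ∑ p ∈ (Icc 1 m) ×ˢ (Icc 1 m),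
          (if d ∣ Nat.gcd p.1 p.2 then ((μ d : ℤ):ℝ) else 0) := sum_comm
    _ = ∑ d ∈ Icc 1 m, ((μ d : ℤ):ℝ) * ((m / d : ℕ) : ℝ) ^ 2 := by
        refine sum_congr rfl fun d _ => ?_
        rw [← sum_filter, sum_const, nsmul_eq_mul, mul_comm]
        congr 1
        have hpred : (((Icc 1 m) ×ˢ (Icc 1 m)).filter (fun p => d ∣ Nat.gcd p.1 p.2))
            = ((Icc 1 m).filter (fun x => d ∣ x)) ×ˢ ((Icc 1 m).filter (fun x => d ∣ x)) := by
          rw [← filter_product]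
          refine filter_congr fun p _ => ?_
          simp [Nat.dvd_gcd_iff]
        rw [hpred, card_product, count_dvd_Icc]
        push_cast
        ring

lemma gcd_count_eq {k : ℕ} (hk : 1 ≤ k) (n : ℕ) :
    (((Icc 1 n) ×ˢ (Icc 1 n)).filter (fun p => Nat.gcd p.1 p.2 = k)).card
      = (((Icc 1 (n / k)) ×ˢ (Icc 1 (n / k))).filter (fun p => Nat.gcd p.1 p.2 = 1)).card := by
  apply card_nbij' (fun p => (p.1 / k, p.2 / k)) (fun q => (k * q.1, k * q.2))
  · rintro ⟨a, b⟩ hab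
    simp only [mem_coe, mem_filter, mem_product, mem_Icc] at hab ⊢
    obtain ⟨⟨⟨ha1, han⟩, ⟨hb1, hbn⟩⟩, hg⟩ := hab
    have hka : k ∣ a := hg ▸ Nat.gcd_dvd_left a b
    have hkb : k ∣ b := hg ▸ Nat.gcd_dvd_right a b
    refine ⟨⟨⟨?_, Nat.div_le_div_right han⟩, ⟨?_, Nat.div_le_div_right hbn⟩⟩, ?_⟩
    · exact (Nat.one_le_div_iff hk).mpr (Nat.le_of_dvd ha1 hka)
    · exact (Nat.one_le_div_iff hk).mpr (Nat.le_of_dvd hb1 hkb)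
    · subst hg
      exact Nat.coprime_div_gcd_div_gcd (Nat.gcd_pos_of_pos_left b ha1)
  · rintro ⟨a, b⟩ hab
    simp only [mem_coe, mem_filter, mem_product, mem_Icc] at hab ⊢
    obtain ⟨⟨⟨ha1, han⟩, ⟨hb1, hbn⟩⟩, hg⟩ := hab
    refine ⟨⟨⟨?_, ?_⟩, ⟨?_, ?_⟩⟩, ?_⟩
    · exact Nat.one_le_iff_ne_zero.mpr (by positivity)
    · rw [mul_comm]; exact (Nat.le_div_iff_mul_le hk).mp han
    · exact Nat.one_le_iff_ne_zero.mpr (by positivity)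
    · rw [mul_comm]; exact (Nat.le_div_iff_mul_le hk).mp hbn
    · rw [Nat.gcd_mul_left, hg, mul_one]
  · rintro ⟨a, b⟩ hab
    simp only [mem_coe, mem_filter, mem_product, mem_Icc] at hab
    obtain ⟨-, hg⟩ := hab
    have hka : k ∣ a := hg ▸ Nat.gcd_dvd_left a b
    have hkb : k ∣ b := hg ▸ Nat.gcd_dvd_right a b
    simp [Nat.mul_div_cancel' hka, Nat.mul_div_cancel' hkb]
  · rintro ⟨a, b⟩ -
    simp [Nat.mul_div_cancel_left _ hk]

lemma squarefull_count_eq {k : ℕ} (hk : 1 ≤ k) (n : ℕ) :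
    ((Icc 1 n).filter (fun x => squarefullPart x = k)).card
      = ((Icc 1 (n / k ^ 2)).filter Squarefree).card := by
  have hk2 : 1 ≤ k ^ 2 := Nat.one_le_pow _ _ hk
  apply card_nbij' (fun x => x / k ^ 2) (fun q => k ^ 2 * q)
  · intro x hx
    simp only [mem_coe, mem_filter, mem_Icc] at hx ⊢
    obtain ⟨⟨hx1, hxn⟩, hsf⟩ := hx
    have hdvd : k ^ 2 ∣ x := by
      have := (Nat.findGreatest_eq_iff.mp hsf).2.1
      exact this (by omega)
    have hq1 : 1 ≤ x / k ^ 2 := (Nat.one_le_div_iff hk2).mpr (Nat.le_of_dvd hx1 hdvd)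
    refine ⟨⟨hq1, Nat.div_le_div_right hxn⟩, ?_⟩
    rw [← squarefullPart_eq_iff hk hq1, Nat.mul_div_cancel' hdvd]
    exact hsf
  · intro q hq
    simp only [mem_coe, mem_filter, mem_Icc] at hq ⊢
    obtain ⟨⟨hq1, hqn⟩, hsf⟩ := hq
    refine ⟨⟨?_, ?_⟩, (squarefullPart_eq_iff hk hq1).mpr hsf⟩
    · exact Nat.one_le_iff_ne_zero.mpr (by positivity)
    · rw [mul_comm]; exact (Nat.le_div_iff_mul_le hk2).mp hqn
  · intro x hx
    simp only [mem_coe, mem_filter, mem_Icc] at hx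
    have hdvd : k ^ 2 ∣ x := (Nat.findGreatest_eq_iff.mp hx.2).2.1 (by omega)
    exact Nat.mul_div_cancel' hdvd
  · rintro q -
    exact Nat.mul_div_cancel_left _ hk2

lemma sq_cast (d : ℕ) : ((d ^ 2 : ℕ) : ℝ) = (d : ℝ) ^ 2 := by push_cast; ring

lemma squarefree_density :
    Tendsto (fun m : ℕ => (((Icc 1 m).filter Squarefree).card : ℝ) / m) atTop
      (𝓝 (6 / π ^ 2)) := by
  have key : Tendsto (fun m : ℕ => ∑' d : ℕ,
      (if d ∈ Icc 1 m then ((μ d : ℤ):ℝ) * (((m / d ^ 2 : ℕ):ℝ) / m) else 0)) atTop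
      (𝓝 (∑' d : ℕ, ((μ d : ℤ):ℝ) * (1 / ((d:ℝ) ^ 2)))) := by
    apply tendsto_tsum_of_dominated_convergence (bound := fun d : ℕ => 1 / (d:ℝ) ^ 2)
      (Real.summable_one_div_nat_pow.mpr one_lt_two)
    · intro d
      rcases eq_or_ne d 0 with rfl | hd
      · simpa using tendsto_const_nhds
      · have hd1 : 1 ≤ d := Nat.pos_of_ne_zero hd
        have hd2 : 0 < d ^ 2 := by positivity
        have hlim := tendsto_const_nhds (x := ((μ d : ℤ):ℝ)) (f := atTop (α := ℕ)) |>.mul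
          (nat_div_cast_tendsto hd2)
        rw [sq_cast] at hlim
        apply Tendsto.congr' ?_ hlim
        filter_upwards [eventually_ge_atTop d] with m hm
        rw [if_pos (mem_Icc.mpr ⟨hd1, hm⟩)]
    · filter_upwards [eventually_ge_atTop 1] with m hm d
      have hm' : (0:ℝ) < m := by exact_mod_cast hm
      split
      · next h =>
        rw [mem_Icc] at h
        have hd' : (0:ℝ) < (d:ℝ) ^ 2 := by
          have : 0 < d := h.1
          positivity
        have hX : ((m / d ^ 2 : ℕ):ℝ) ≤ (m:ℝ) / (d:ℝ) ^ 2 := by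
          calc ((m / d ^ 2 : ℕ):ℝ) ≤ (m:ℝ) / ((d ^ 2 : ℕ):ℝ) := Nat.cast_div_le
            _ = (m:ℝ) / (d:ℝ) ^ 2 := by rw [sq_cast]
        calc ‖((μ d : ℤ):ℝ) * (((m / d ^ 2 : ℕ):ℝ) / m)‖
            = ‖((μ d : ℤ):ℝ)‖ * (((m / d ^ 2 : ℕ):ℝ) / m) := by
              rw [norm_mul, Real.norm_of_nonneg
                (show (0:ℝ) ≤ ((m / d ^ 2 : ℕ):ℝ) / m by positivity)]
          _ ≤ 1 * (((m / d ^ 2 : ℕ):ℝ) / m) := by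
              apply mul_le_mul_of_nonneg_right (norm_moebius_le_one d) (by positivity)
          _ = ((m / d ^ 2 : ℕ):ℝ) / m := one_mul _
          _ ≤ ((m:ℝ) / (d:ℝ) ^ 2) / m := by gcongr
          _ = 1 / (d:ℝ) ^ 2 := by field_simp
      · next h => rw [norm_zero]; positivity
  have heq : ∀ m : ℕ, (∑' d : ℕ,
      (if d ∈ Icc 1 m then ((μ d : ℤ):ℝ) * (((m / d ^ 2 : ℕ):ℝ) / m) else 0))
      = (((Icc 1 m).filter Squarefree).card : ℝ) / m := by
    intro m
    rw [tsum_eq_sum (s := Icc 1 m) (fun d hd => if_neg hd)]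
    rw [squarefree_count_eq, Finset.sum_div]
    refine sum_congr rfl fun d hd => ?_
    rw [if_pos hd, mul_div_assoc]
  have hval : (∑' d : ℕ, ((μ d : ℤ):ℝ) * (1 / ((d:ℝ) ^ 2))) = 6 / π ^ 2 := by
    rw [← tsum_moebius_div_sq]
    exact tsum_congr fun d => by rw [mul_one_div]
  rw [hval] at key
  exact key.congr fun m => heq m

lemma coprime_density :
    Tendsto (fun m : ℕ => ((((Icc 1 m) ×ˢ (Icc 1 m)).filter
        (fun p => Nat.gcd p.1 p.2 = 1)).card : ℝ) / (m:ℝ) ^ 2) atTop (𝓝 (6 / π ^ 2)) := by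
  have key : Tendsto (fun m : ℕ => ∑' d : ℕ,
      (if d ∈ Icc 1 m then ((μ d : ℤ):ℝ) * (((m / d : ℕ):ℝ) / m) ^ 2 else 0)) atTop
      (𝓝 (∑' d : ℕ, ((μ d : ℤ):ℝ) * (1 / (d:ℝ)) ^ 2)) := by
    apply tendsto_tsum_of_dominated_convergence (bound := fun d : ℕ => 1 / (d:ℝ) ^ 2)
      (Real.summable_one_div_nat_pow.mpr one_lt_two)
    · intro d
      rcases eq_or_ne d 0 with rfl | hd
      · simpa using tendsto_const_nhds
      · have hd1 : 1 ≤ d := Nat.pos_of_ne_zero hd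
        have hlim := tendsto_const_nhds (x := ((μ d : ℤ):ℝ)) (f := atTop (α := ℕ)) |>.mul
          ((nat_div_cast_tendsto hd1).pow 2)
        apply Tendsto.congr' ?_ hlim
        filter_upwards [eventually_ge_atTop d] with m hm
        rw [if_pos (mem_Icc.mpr ⟨hd1, hm⟩)]
    · filter_upwards [eventually_ge_atTop 1] with m hm d
      have hm' : (0:ℝ) < m := by exact_mod_cast hm
      split
      · next h =>
        rw [mem_Icc] at h
        have hd' : (0:ℝ) < (d:ℝ) := by exact_mod_cast h.1
        have hX : ((m / d : ℕ):ℝ) ≤ (m:ℝ) / (d:ℝ) := Nat.cast_div_le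
        calc ‖((μ d : ℤ):ℝ) * (((m / d : ℕ):ℝ) / m) ^ 2‖
            = ‖((μ d : ℤ):ℝ)‖ * (((m / d : ℕ):ℝ) / m) ^ 2 := by
              rw [norm_mul, Real.norm_of_nonneg
                (show (0:ℝ) ≤ (((m / d : ℕ):ℝ) / m) ^ 2 by positivity)]
          _ ≤ 1 * (((m / d : ℕ):ℝ) / m) ^ 2 :=
              mul_le_mul_of_nonneg_right (norm_moebius_le_one d) (by positivity)
          _ = (((m / d : ℕ):ℝ) / m) ^ 2 := one_mul _
          _ ≤ (((m:ℝ) / (d:ℝ)) / m) ^ 2 := by gcongr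
          _ = (1 / (d:ℝ)) ^ 2 := by
              congr 1
              field_simp
          _ = 1 / (d:ℝ) ^ 2 := by rw [div_pow, one_pow]
      · next h => rw [norm_zero]; positivity
  have heq : ∀ m : ℕ, (∑' d : ℕ,
      (if d ∈ Icc 1 m then ((μ d : ℤ):ℝ) * (((m / d : ℕ):ℝ) / m) ^ 2 else 0))
      = ((((Icc 1 m) ×ˢ (Icc 1 m)).filter
          (fun p => Nat.gcd p.1 p.2 = 1)).card : ℝ) / (m:ℝ) ^ 2 := by
    intro m
    rw [tsum_eq_sum (s := Icc 1 m) (fun d hd => if_neg hd)]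
    rw [coprime_count_eq, Finset.sum_div]
    refine sum_congr rfl fun d hd => ?_
    rw [if_pos hd, div_pow, mul_div_assoc]
  have hval : (∑' d : ℕ, ((μ d : ℤ):ℝ) * (1 / (d:ℝ)) ^ 2) = 6 / π ^ 2 := by
    rw [← tsum_moebius_div_sq]
    exact tsum_congr fun d => by rw [div_pow, one_pow, mul_one_div]
  rw [hval] at key
  exact key.congr fun m => heq m

/-- Let `Xₙ, Yₙ` be independent and uniform on `{1, …, n}`, `Zₙ = gcd (Xₙ, Yₙ)` and
`Wₙ = r (Xₙ)` where `r m` is the largest `a` with `a ^ 2 ∣ m`. Then both `Zₙ` and `Wₙ`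
converge in law to the Zeta law of parameter `2`: for every `k ≥ 1`,
`P(Zₙ = k) → k⁻² / ζ(2)` and `P(Wₙ = k) → k⁻² / ζ(2)`, with `ζ(2) = π²/6`. -/
theorem gcd_and_sqrt_largest_square_divisor_tendsto_zeta_two (k : ℕ) (hk : 1 ≤ k) :
    Tendsto (fun n : ℕ =>
        ((((Finset.Icc 1 n) ×ˢ (Finset.Icc 1 n)).filter
            fun p => Nat.gcd p.1 p.2 = k).card : ℝ) / (n : ℝ) ^ 2)
      atTop (𝓝 ((1 / (k : ℝ) ^ 2) / (π ^ 2 / 6))) ∧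
    Tendsto (fun n : ℕ =>
        (((Finset.Icc 1 n).filter fun x => squarefullPart x = k).card : ℝ) / (n : ℝ))
      atTop (𝓝 ((1 / (k : ℝ) ^ 2) / (π ^ 2 / 6))) := by
  have hπ : (π:ℝ) ≠ 0 := Real.pi_ne_zero
  have hk' : (0:ℝ) < k := by exact_mod_cast hk
  constructor
  · have h1 := coprime_density.comp (nat_div_tendsto_atTop hk)
    have h2 := h1.mul ((nat_div_cast_tendsto hk).pow 2)
    have hlimeq : (6 / π ^ 2) * (1 / (k:ℝ)) ^ 2 = (1 / (k:ℝ) ^ 2) / (π ^ 2 / 6) := by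
      field_simp
    rw [hlimeq] at h2
    apply Tendsto.congr' ?_ h2
    filter_upwards [eventually_ge_atTop k, eventually_ge_atTop 1] with n hn hn1
    have hq1 : 1 ≤ n / k := (Nat.one_le_div_iff hk).mpr hn
    have hq' : (0:ℝ) < ((n / k : ℕ):ℝ) := by exact_mod_cast hq1
    have hn' : (0:ℝ) < n := by exact_mod_cast hn1
    simp only [Function.comp_apply]
    rw [gcd_count_eq hk n]
    field_simp
  · have hk2 : 1 ≤ k ^ 2 := Nat.one_le_pow _ _ hk
    have h1 := squarefree_density.comp (nat_div_tendsto_atTop hk2)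
    have h2 := h1.mul (nat_div_cast_tendsto hk2)
    have hcast : ((k ^ 2 : ℕ):ℝ) = (k:ℝ) ^ 2 := by push_cast; ring
    have hlimeq : (6 / π ^ 2) * (1 / ((k ^ 2 : ℕ):ℝ)) = (1 / (k:ℝ) ^ 2) / (π ^ 2 / 6) := by
      rw [hcast]
      field_simp
    rw [hlimeq] at h2
    apply Tendsto.congr' ?_ h2
    filter_upwards [eventually_ge_atTop (k ^ 2), eventually_ge_atTop 1] with n hn hn1
    have hq1 : 1 ≤ n / k ^ 2 := (Nat.one_le_div_iff hk2).mpr hn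
    have hq' : (0:ℝ) < ((n / k ^ 2 : ℕ):ℝ) := by exact_mod_cast hq1
    have hn' : (0:ℝ) < n := by exact_mod_cast hn1
    simp only [Function.comp_apply]
    rw [squarefull_count_eq hk n]
    field_simp
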